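/- (Two-step fully adaptive composition; key inductive step.) Let ν and ν' be probability measures on a measurable space Ω₁, and let η, η' be Markov kernels from Ω₁ to a measurable space Ω₂. Let μ₁ ≥ 0 be a constant with max{H_α(ν‖ν'), H_α(ν'‖ν)} ≤ H_α(N(μ₁,1)‖N(0,1)) for all real α > 0, and let μ₂ : Ω₁ → [0, ∞) be measurable with max{H_α(η(a)‖η'(a)), H_α(η'(a)‖η(a))} ≤ H_α(N(μ₂(a),1)‖N(0,1)) for every a ∈ Ω₁ and all real α > 0. Let B ≥ 0 and suppose μ₁² + μ₂(a)² ≤ B² for ν-almost every and ν'-almost every a. Then for every real α > 0: max{ H_α(ν ⊗ η‖ν' ⊗ η'), H_α(ν' ⊗ η'‖ν ⊗ η) } ≤ H_α(N(B,1)‖N(0,1)). -/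

import Mathlib

open MeasureTheory ProbabilityTheory Real

/-- Hockey-stick divergence `H_α(P‖Q) = sup_E (P(E) − α·Q(E))`. -/
noncomputable def hockeyStick {Ω : Type*} [MeasurableSpace Ω] (α : ℝ) (P Q : Measure Ω) : ℝ :=
  ⨆ E : {E : Set Ω // MeasurableSet E}, ((P E).toReal - α * (Q E).toReal)

namespace TwoStepAux

open Set Filter
open scoped ENNReal NNReal

variable {Ω : Type*} [MeasurableSpace Ω]

lemma hs_bdd (α : ℝ) (hα : 0 ≤ α) (P Q : Measure Ω) [IsProbabilityMeasure P] :
    BddAbove (Set.range fun E : {E : Set Ω // MeasurableSet E} =>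
      ((P E).toReal - α * (Q E).toReal)) := by
  refine ⟨1, ?_⟩
  rintro x ⟨E, rfl⟩
  simp only []
  have h1 : (P E).toReal ≤ 1 := by
    have := prob_le_one (μ := P) (s := E)
    simpa using ENNReal.toReal_le_of_le_ofReal one_pos.le (by simpa using this)
  have h2 : 0 ≤ α * (Q E).toReal := mul_nonneg hα ENNReal.toReal_nonneg
  simp only [tsub_le_iff_right]
  nlinarith

lemma hs_ge (α : ℝ) (hα : 0 ≤ α) (P Q : Measure Ω) [IsProbabilityMeasure P]
    {E : Set Ω} (hE : MeasurableSet E) :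
    (P E).toReal - α * (Q E).toReal ≤ hockeyStick α P Q :=
  le_ciSup (hs_bdd α hα P Q) ⟨E, hE⟩

lemma hs_le {α c : ℝ} {P Q : Measure Ω}
    (h : ∀ E : Set Ω, MeasurableSet E → (P E).toReal - α * (Q E).toReal ≤ c) :
    hockeyStick α P Q ≤ c :=
  ciSup_le fun E => h E.1 E.2

lemma hs_nonneg (α : ℝ) (hα : 0 ≤ α) (P Q : Measure Ω) [IsProbabilityMeasure P] :
    0 ≤ hockeyStick α P Q := by
  have := hs_ge α hα P Q MeasurableSet.empty
  simpa using this

lemma hs_self_le (α : ℝ) (hα : 0 ≤ α) (P : Measure Ω) [IsProbabilityMeasure P] :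
    hockeyStick α P P ≤ max (1 - α) 0 := by
  refine hs_le fun E hE => ?_
  have h1 : (P E).toReal ≤ 1 := by
    simpa using ENNReal.toReal_le_of_le_ofReal one_pos.le (by simpa using prob_le_one (μ := P) (s := E))
  have h0 : 0 ≤ (P E).toReal := ENNReal.toReal_nonneg
  rcases le_total α 1 with h | h
  · refine le_max_of_le_left ?_
    nlinarith
  · refine le_max_of_le_right ?_
    nlinarith

lemma one_ne : (1 : NNReal) ≠ 0 := one_ne_zero

noncomputable def Phi (t : ℝ) : ℝ := (gaussianReal 0 1 (Iic t)).toReal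

noncomputable def Tg (μ c : ℝ) : ℝ := (gaussianReal μ 1 (Ioi c)).toReal

instance noAtomsGauss (μ : ℝ) : NullSingletonClass (gaussianReal μ 1) :=
  ⟨fun x => (gaussianReal_absolutelyContinuous μ one_ne) (measure_singleton x)⟩

lemma gauss_map_add (μ : ℝ) : (gaussianReal 0 1).map (· + μ) = gaussianReal μ 1 := by
  simpa using gaussianReal_map_add_const (μ := 0) (v := 1) μ

lemma gauss_translate (μ : ℝ) {s : Set ℝ} (hs : MeasurableSet s) :
    gaussianReal μ 1 s = gaussianReal 0 1 ((· + μ) ⁻¹' s) := by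
  rw [← gauss_map_add μ, Measure.map_apply (by fun_prop) hs]

lemma gauss_Ioi (μ c : ℝ) : gaussianReal μ 1 (Ioi c) = gaussianReal 0 1 (Ioi (c - μ)) := by
  rw [gauss_translate μ measurableSet_Ioi]
  congr 1
  ext x
  simp [lt_sub_iff_add_lt]

lemma gauss_neg (c : ℝ) : gaussianReal 0 1 (Ioi c) = gaussianReal 0 1 (Iic (-c)) := by
  have hmap : (gaussianReal 0 1).map ((-1) * ·) = gaussianReal 0 1 := by
    rw [gaussianReal_map_const_mul (μ := 0) (v := 1) (-1)]
    norm_num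
  have : gaussianReal 0 1 (Ioi c) = (gaussianReal 0 1).map ((-1) * ·) (Ioi c) := by rw [hmap]
  rw [this, Measure.map_apply (by fun_prop) measurableSet_Ioi]
  have hset : ((-1 : ℝ) * ·) ⁻¹' (Ioi c) = Iio (-c) := by
    ext x; simp
  rw [hset]
  exact (measure_congr (Iio_ae_eq_Iic (μ := gaussianReal 0 1) (a := -c)))

lemma Tg_eq_Phi (μ c : ℝ) : Tg μ c = Phi (μ - c) := by
  unfold Tg Phi
  rw [gauss_Ioi, gauss_neg]
  norm_num

lemma gauss_Iic_add_Ioi (c : ℝ) :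
    gaussianReal 0 1 (Iic c) + gaussianReal 0 1 (Ioi c) = 1 := by
  rw [← measure_union (by simp [disjoint_left]) measurableSet_Ioi]
  simp [Iic_union_Ioi]

lemma Phi_add_Tg (c : ℝ) : Phi c + Tg 0 c = 1 := by
  unfold Phi Tg
  rw [← ENNReal.toReal_add (measure_ne_top _ _) (measure_ne_top _ _), gauss_Iic_add_Ioi]
  simp

lemma gauss_set_integral (μ : ℝ) {s : Set ℝ} :
    (gaussianReal μ 1 s).toReal = ∫ x in s, gaussianPDFReal μ 1 x := by
  rw [gaussianReal_apply_eq_integral μ one_ne s, ENNReal.toReal_ofReal]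
  exact integral_nonneg fun x => gaussianPDFReal_nonneg μ 1 x



lemma meas_pdf (μ : ℝ) : Measurable (gaussianPDF μ 1) := by
  rw [gaussianPDF_def]; exact (measurable_gaussianPDFReal μ 1).ennreal_ofReal

lemma pdf_le_one (μ x : ℝ) : gaussianPDFReal μ 1 x ≤ 1 := by
  rw [gaussianPDFReal_def]
  push_cast
  have h1 : rexp (-(x - μ)^2 / (2*1)) ≤ 1 := by
    rw [exp_le_one_iff]; nlinarith [sq_nonneg (x-μ)]
  have h2 : (√(2*π*1))⁻¹ ≤ 1 := by
    rw [inv_le_one_iff₀]; right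
    nlinarith [Real.sq_sqrt (by positivity : (0:ℝ) ≤ 2*π*1), Real.sqrt_nonneg (2*π*1), pi_gt_three]
  nlinarith [exp_nonneg (-(x-μ)^2/(2*1)), Real.sqrt_nonneg (2*π*1),
    inv_nonneg.2 (Real.sqrt_nonneg (2*π*1))]

lemma gauss_pos {s : Set ℝ} (hs : MeasurableSet s) (hvol : 0 < volume s) (μ : ℝ) :
    0 < gaussianReal μ 1 s := by
  rw [gaussianReal_of_var_ne_zero μ one_ne]
  rw [pos_iff_ne_zero]
  intro h
  rw [withDensity_apply_eq_zero' (meas_pdf μ).aemeasurable] at h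
  have : {x | gaussianPDF μ 1 x ≠ 0} ∩ s = s := by
    ext x
    simp only [mem_inter_iff, mem_setOf_eq, and_iff_right_iff_imp]
    intro _
    simp [gaussianPDF_def, ENNReal.ofReal_eq_zero, not_le, gaussianPDFReal_pos μ 1 x one_ne]
  rw [this] at h
  exact absurd h hvol.ne'

lemma gauss_lt_one {s : Set ℝ} (hs : MeasurableSet s) (hvol : 0 < volume sᶜ) (μ : ℝ) :
    gaussianReal μ 1 s < 1 := by
  have h := gauss_pos hs.compl hvol μ
  have hsum := measure_add_measure_compl (μ := gaussianReal μ 1) hs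
  rw [measure_univ] at hsum
  rcases lt_or_ge (gaussianReal μ 1 s) 1 with h1 | h1
  · exact h1
  · exfalso
    have h2 : gaussianReal μ 1 s = 1 := le_antisymm prob_le_one h1
    rw [h2] at hsum
    nth_rewrite 2 [(by simp : (1:ENNReal) = 1 + 0)] at hsum
    rw [ENNReal.add_right_inj (by simp)] at hsum
    exact h.ne' hsum

lemma Phi_pos (t : ℝ) : 0 < Phi t :=
  ENNReal.toReal_pos (gauss_pos measurableSet_Iic (by simp) 0).ne' (measure_ne_top _ _)

lemma Tg_pos (μ c : ℝ) : 0 < Tg μ c :=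
  ENNReal.toReal_pos (gauss_pos measurableSet_Ioi (by simp) μ).ne' (measure_ne_top _ _)

lemma Phi_lt_one (t : ℝ) : Phi t < 1 := by
  have := Phi_add_Tg t
  have := Tg_pos 0 t
  linarith

lemma Phi_mono : Monotone Phi := fun s t hst =>
  ENNReal.toReal_mono (measure_ne_top _ _) (measure_mono (Iic_subset_Iic.2 hst))

lemma Phi_strictMono : StrictMono Phi := by
  intro s t hst
  have hsplit : gaussianReal 0 1 (Iic s) + gaussianReal 0 1 (Ioc s t) = gaussianReal 0 1 (Iic t) := by
    rw [← measure_union (by simp [disjoint_left]; intro x h1 h2; linarith) measurableSet_Ioc,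
      Iic_union_Ioc_eq_Iic hst.le]
  have hpos : 0 < gaussianReal 0 1 (Ioc s t) :=
    gauss_pos measurableSet_Ioc (by simp [hst]) 0
  unfold Phi
  rw [← hsplit, ENNReal.toReal_add (measure_ne_top _ _) (measure_ne_top _ _)]
  have := ENNReal.toReal_pos hpos.ne' (measure_ne_top _ _)
  linarith

lemma Phi_lipschitz : LipschitzWith 1 Phi := by
  have key : ∀ s t : ℝ, s ≤ t → Phi t - Phi s ≤ t - s := by
    intro s t hst
    have hsplit : gaussianReal 0 1 (Iic s) + gaussianReal 0 1 (Ioc s t) = gaussianReal 0 1 (Iic t) := by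
      rw [← measure_union (by simp [disjoint_left]; intro x h1 h2; linarith) measurableSet_Ioc,
        Iic_union_Ioc_eq_Iic hst]
    have hb : gaussianReal 0 1 (Ioc s t) ≤ ENNReal.ofReal (t - s) := by
      rw [gaussianReal_apply 0 one_ne]
      calc ∫⁻ x in Ioc s t, gaussianPDF 0 1 x
          ≤ ∫⁻ _ in Ioc s t, 1 := by
            refine lintegral_mono fun x => ?_
            rw [gaussianPDF_def]
            exact ENNReal.ofReal_le_one.2 (pdf_le_one 0 x)
        _ = ENNReal.ofReal (t - s) := by
            simp [Real.volume_Ioc]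
    have : Phi t - Phi s = (gaussianReal 0 1 (Ioc s t)).toReal := by
      unfold Phi
      rw [← hsplit, ENNReal.toReal_add (measure_ne_top _ _) (measure_ne_top _ _)]
      ring
    rw [this]
    calc (gaussianReal 0 1 (Ioc s t)).toReal ≤ (ENNReal.ofReal (t - s)).toReal :=
          ENNReal.toReal_mono (by simp) hb
      _ = t - s := ENNReal.toReal_ofReal (by linarith)
  refine LipschitzWith.of_dist_le_mul fun s t => ?_
  rw [Real.dist_eq, Real.dist_eq, NNReal.coe_one, one_mul]
  rcases le_total s t with h | h
  · rw [abs_sub_comm (Phi s), abs_of_nonneg (sub_nonneg.2 (Phi_mono h)),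
      abs_sub_comm s, abs_of_nonneg (sub_nonneg.2 h)]
    exact key s t h
  · rw [abs_of_nonneg (sub_nonneg.2 (Phi_mono h)), abs_of_nonneg (sub_nonneg.2 h)]
    exact key t s h

lemma Phi_continuous : Continuous Phi := Phi_lipschitz.continuous

open Set Filter MeasureTheory ProbabilityTheory Real
open scoped ENNReal NNReal

lemma Tg_strictAnti (μ : ℝ) : StrictAnti (Tg μ) := by
  intro c c' h
  rw [Tg_eq_Phi, Tg_eq_Phi]
  exact Phi_strictMono (by linarith)

lemma Tg_lt_one (μ c : ℝ) : Tg μ c < 1 := by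
  rw [Tg_eq_Phi]; exact Phi_lt_one _

lemma Tg_le_one (μ c : ℝ) : Tg μ c ≤ 1 := (Tg_lt_one μ c).le

lemma Phi_tendsto_atTop : Tendsto Phi atTop (nhds 1) := by
  have h := tendsto_measure_Iic_atTop (gaussianReal 0 1)
  rw [measure_univ] at h
  have := (ENNReal.tendsto_toReal (by simp : (1:ENNReal) ≠ ⊤)).comp h
  exact this

lemma Tg0_tendsto_atBot : Tendsto (Tg 0) atBot (nhds 1) := by
  have h := tendsto_measure_Ici_atBot (gaussianReal 0 1)
  rw [measure_univ] at h
  have heq : (fun c => gaussianReal 0 1 (Ioi c)) = fun c => gaussianReal 0 1 (Ici c) := by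
    ext c; exact measure_congr (Ioi_ae_eq_Ici (μ := gaussianReal 0 1) (a := c))
  have : Tendsto (fun c => gaussianReal 0 1 (Ioi c)) atBot (nhds 1) := heq ▸ h
  have := (ENNReal.tendsto_toReal (by simp : (1:ENNReal) ≠ ⊤)).comp this
  exact this

lemma Phi_tendsto_atBot : Tendsto Phi atBot (nhds 0) := by
  have h : Phi = fun c => 1 - Tg 0 c := by
    ext c; have := Phi_add_Tg c; linarith
  rw [h]
  have := Tg0_tendsto_atBot.const_sub 1
  simpa using this

lemma exists_Phi_eq {x : ℝ} (hx0 : 0 < x) (hx1 : x < 1) : ∃ t, Phi t = x := by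
  obtain ⟨a, ha⟩ := (Phi_tendsto_atBot.eventually_lt_const hx0).exists
  obtain ⟨b, hb⟩ := (Phi_tendsto_atTop.eventually_const_lt hx1).exists
  have hab : a ≤ b := by
    by_contra hc
    push_neg at hc
    exact absurd (Phi_mono hc.le) (by linarith)
  obtain ⟨t, _, ht⟩ := intermediate_value_Icc hab Phi_continuous.continuousOn
    (⟨ha.le, hb.le⟩ : x ∈ Icc (Phi a) (Phi b))
  exact ⟨t, ht⟩

lemma exists_Tg_eq (μ : ℝ) {x : ℝ} (hx0 : 0 < x) (hx1 : x < 1) : ∃ c, Tg μ c = x := by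
  obtain ⟨t, ht⟩ := exists_Phi_eq hx0 hx1
  exact ⟨μ - t, by rw [Tg_eq_Phi]; simpa using ht⟩

lemma np {X : Type*} [MeasurableSpace X] (μ : Measure X) {f g : X → ℝ≥0∞}
    (hf : Measurable f) (hg : Measurable g) (a : ℝ≥0∞) {E : Set X} (hE : MeasurableSet E) :
    μ.withDensity f E + a * μ.withDensity g {x | a * g x < f x} ≤
      μ.withDensity f {x | a * g x < f x} + a * μ.withDensity g E := by
  set S := {x | a * g x < f x} with hSdef
  have hSm : MeasurableSet S := measurableSet_lt (hg.const_mul a) hf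
  have dec : ∀ (h : X → ℝ≥0∞) (T U : Set X), MeasurableSet T → MeasurableSet U →
      ∫⁻ x in T, h x ∂μ = (∫⁻ x in T ∩ U, h x ∂μ) + ∫⁻ x in T \ U, h x ∂μ := by
    intro h T U hT hU
    rw [← lintegral_union (hT.diff hU) (disjoint_sdiff_self_right.mono_left inter_subset_right),
      inter_union_diff]
  have hmul : ∀ (T : Set X), MeasurableSet T →
      a * ∫⁻ x in T, g x ∂μ = ∫⁻ x in T, a * g x ∂μ := by
    intro T hT
    rw [lintegral_const_mul a hg]
  rw [withDensity_apply _ hE, withDensity_apply _ hSm, withDensity_apply _ hE,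
    withDensity_apply _ hSm, hmul E hE, hmul S hSm, dec f E S hE hSm, dec f S E hSm hE,
    dec (fun x => a * g x) E S hE hSm, dec (fun x => a * g x) S E hSm hE, inter_comm S E]
  have h1 : ∫⁻ x in E \ S, f x ∂μ ≤ ∫⁻ x in E \ S, a * g x ∂μ := by
    refine setLIntegral_mono_ae ((hg.const_mul a).aemeasurable) (ae_of_all _ fun x hx => ?_)
    exact not_lt.1 fun hc => hx.2 hc
  have h2 : ∫⁻ x in S \ E, a * g x ∂μ ≤ ∫⁻ x in S \ E, f x ∂μ := by
    refine setLIntegral_mono_ae hf.aemeasurable (ae_of_all _ fun x hx => ?_)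
    exact (hx.1 : a * g x < f x).le
  calc (∫⁻ x in E ∩ S, f x ∂μ) + (∫⁻ x in E \ S, f x ∂μ) +
        ((∫⁻ x in E ∩ S, a * g x ∂μ) + ∫⁻ x in S \ E, a * g x ∂μ)
      ≤ (∫⁻ x in E ∩ S, f x ∂μ) + (∫⁻ x in E \ S, a * g x ∂μ) +
        ((∫⁻ x in E ∩ S, a * g x ∂μ) + ∫⁻ x in S \ E, f x ∂μ) := by
        exact add_le_add (add_le_add le_rfl h1) (add_le_add le_rfl h2)
    _ = (∫⁻ x in E ∩ S, f x ∂μ) + (∫⁻ x in S \ E, f x ∂μ) +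
        ((∫⁻ x in E ∩ S, a * g x ∂μ) + ∫⁻ x in E \ S, a * g x ∂μ) := by ring

lemma gauss_S_eq_Ioi {μ β : ℝ} (hμ : 0 < μ) (hβ : 0 < β) :
    {x : ℝ | ENNReal.ofReal β * gaussianPDF 0 1 x < gaussianPDF μ 1 x} =
      Ioi (μ / 2 + Real.log β / μ) := by
  ext x
  simp only [mem_setOf_eq, mem_Ioi, gaussianPDF_def]
  rw [← ENNReal.ofReal_mul hβ.le,
    ENNReal.ofReal_lt_ofReal_iff (gaussianPDFReal_pos μ 1 x one_ne)]
  rw [gaussianPDFReal_def, gaussianPDFReal_def]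
  push_cast
  rw [show β * ((√(2 * π * 1))⁻¹ * rexp (-(x - 0) ^ 2 / (2 * 1))) =
      (√(2 * π * 1))⁻¹ * (β * rexp (-(x - 0) ^ 2 / (2 * 1))) by ring]
  rw [mul_lt_mul_iff_right₀ (by positivity)]
  nth_rewrite 1 [show β = rexp (Real.log β) from (Real.exp_log hβ).symm]
  rw [← Real.exp_add, Real.exp_lt_exp]
  have hrw : μ / 2 + Real.log β / μ = (μ ^ 2 / 2 + Real.log β) / μ := by
    field_simp
  constructor
  · intro h
    rw [hrw, div_lt_iff₀ hμ]
    nlinarith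
  · intro h
    rw [hrw, div_lt_iff₀ hμ] at h
    nlinarith

lemma gauss_wd (μ : ℝ) : gaussianReal μ 1 = volume.withDensity (gaussianPDF μ 1) :=
  gaussianReal_of_var_ne_zero μ one_ne

lemma hs_gauss_le {μ β : ℝ} (hμ : 0 < μ) (hβ : 0 < β) {E : Set ℝ} (hE : MeasurableSet E) :
    (gaussianReal μ 1 E).toReal - β * (gaussianReal 0 1 E).toReal ≤
      Tg μ (μ / 2 + Real.log β / μ) - β * Tg 0 (μ / 2 + Real.log β / μ) := by
  set c := μ / 2 + Real.log β / μ with hc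
  have key := np volume (meas_pdf μ) (meas_pdf 0) (ENNReal.ofReal β) hE
  rw [gauss_S_eq_Ioi hμ hβ, ← gauss_wd, ← gauss_wd] at key
  have hfin : ∀ (P : Measure ℝ) (s : Set ℝ), P = gaussianReal μ 1 ∨ P = gaussianReal 0 1 → True := fun _ _ _ => trivial
  have h1 := ENNReal.toReal_mono (by finiteness) key
  rw [ENNReal.toReal_add (by finiteness) (by finiteness),
    ENNReal.toReal_add (by finiteness) (by finiteness),
    ENNReal.toReal_mul, ENNReal.toReal_mul, ENNReal.toReal_ofReal hβ.le] at h1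
  unfold Tg
  linarith

lemma hs_gauss_eq {μ β : ℝ} (hμ : 0 < μ) (hβ : 0 < β) :
    hockeyStick β (gaussianReal μ 1) (gaussianReal 0 1) =
      Tg μ (μ / 2 + Real.log β / μ) - β * Tg 0 (μ / 2 + Real.log β / μ) := by
  refine le_antisymm (hs_le fun E hE => hs_gauss_le hμ hβ hE) ?_
  exact hs_ge β hβ.le _ _ measurableSet_Ioi

lemma hs_gauss_eq' {μ : ℝ} (hμ : 0 < μ) (c : ℝ) :
    hockeyStick (rexp (μ * c - μ ^ 2 / 2)) (gaussianReal μ 1) (gaussianReal 0 1) =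
      Tg μ c - rexp (μ * c - μ ^ 2 / 2) * Tg 0 c := by
  have h := hs_gauss_eq hμ (Real.exp_pos (μ * c - μ ^ 2 / 2))
  rw [Real.log_exp] at h
  have hcc : μ / 2 + (μ * c - μ ^ 2 / 2) / μ = c := by field_simp; ring
  rwa [hcc] at h

lemma pdf_continuous : Continuous (gaussianPDFReal 0 1) := by
  unfold gaussianPDFReal; fun_prop

lemma Phi_eq_integral (u : ℝ) : Phi u = ∫ x in Iic u, gaussianPDFReal 0 1 x := gauss_set_integral 0

lemma Phi_hasDeriv (t : ℝ) : HasDerivAt Phi (gaussianPDFReal 0 1 t) t := by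
  have hint : Integrable (gaussianPDFReal 0 1) := integrable_gaussianPDFReal 0 1
  have heq : Phi = fun u => (∫ x in Iic (0:ℝ), gaussianPDFReal 0 1 x) +
      ∫ x in (0:ℝ)..u, gaussianPDFReal 0 1 x := by
    funext u
    rw [Phi_eq_integral,
      ← intervalIntegral.integral_Iic_sub_Iic hint.integrableOn hint.integrableOn]
    ring
  have h1 : HasDerivAt (fun u => ∫ x in (0:ℝ)..u, gaussianPDFReal 0 1 x)
      (gaussianPDFReal 0 1 t) t := by
    refine intervalIntegral.integral_hasDerivAt_right hint.intervalIntegrable ?_ ?_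
    · exact pdf_continuous.stronglyMeasurable.stronglyMeasurableAtFilter
    · exact pdf_continuous.continuousAt
  rw [heq]
  exact h1.const_add _

noncomputable def Fb (β x : ℝ) : ℝ :=
  Phi (x / 2 - Real.log β / x) - β * Phi (-x / 2 - Real.log β / x)

lemma pdf_ratio {β x : ℝ} (hβ : 0 < β) (hx : x ≠ 0) :
    β * gaussianPDFReal 0 1 (-x / 2 - Real.log β / x) =
      gaussianPDFReal 0 1 (x / 2 - Real.log β / x) := by
  simp only [gaussianPDFReal_def]
  push_cast
  set L := Real.log β with hL
  have hexp : (-(x / 2 - L / x - 0) ^ 2 / (2 * 1) : ℝ) =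
      L + -(-x / 2 - L / x - 0) ^ 2 / (2 * 1) := by
    field_simp
    ring
  rw [show β * ((√(2 * π * 1))⁻¹ * rexp (-(-x / 2 - L / x - 0) ^ 2 / (2 * 1))) =
      (√(2 * π * 1))⁻¹ * (β * rexp (-(-x / 2 - L / x - 0) ^ 2 / (2 * 1))) by ring]
  congr 1
  rw [← Real.exp_log hβ, ← Real.exp_add, ← hL, ← hexp]

lemma Fb_hasDeriv {β x : ℝ} (hβ : 0 < β) (hx : 0 < x) :
    HasDerivAt (Fb β) (gaussianPDFReal 0 1 (x / 2 - Real.log β / x)) x := by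
  set L := Real.log β with hL
  have hu : HasDerivAt (fun y => y / 2 - L / y) (1 / 2 + L / x ^ 2) x := by
    have h1 : HasDerivAt (fun y : ℝ => y / 2) (1 / 2) x := by
      simpa using (hasDerivAt_id x).div_const 2
    have h2 : HasDerivAt (fun y : ℝ => L / y) (-(L / x ^ 2)) x := by
      have := (hasDerivAt_const x L).div (hasDerivAt_id x) hx.ne'
      exact this.congr_deriv (by simp; ring)
    exact (h1.sub h2).congr_deriv (by norm_num)
  have hw : HasDerivAt (fun y => -y / 2 - L / y) (-(1 / 2) + L / x ^ 2) x := by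
    have h1 : HasDerivAt (fun y : ℝ => -y / 2) (-(1 / 2)) x := by
      exact ((hasDerivAt_id' x).neg.div_const 2).congr_deriv (by norm_num)
    have h2 : HasDerivAt (fun y : ℝ => L / y) (-(L / x ^ 2)) x := by
      have := (hasDerivAt_const x L).div (hasDerivAt_id x) hx.ne'
      exact this.congr_deriv (by simp; ring)
    exact (h1.sub h2).congr_deriv (by norm_num)
  have hFu := (Phi_hasDeriv (x / 2 - L / x)).comp x hu
  have hFw := ((Phi_hasDeriv (-x / 2 - L / x)).comp x hw).const_mul β
  have := hFu.sub hFw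
  refine this.congr_deriv ?_
  have hr := pdf_ratio hβ hx.ne'
  rw [← hL] at hr
  linear_combination (1 / 2 - L / x ^ 2) * hr

lemma hs_eq_Fb {μ β : ℝ} (hμ : 0 < μ) (hβ : 0 < β) :
    hockeyStick β (gaussianReal μ 1) (gaussianReal 0 1) = Fb β μ := by
  rw [hs_gauss_eq hμ hβ]
  unfold Fb
  rw [Tg_eq_Phi, Tg_eq_Phi]
  have e1 : μ - (μ / 2 + Real.log β / μ) = μ / 2 - Real.log β / μ := by ring
  have e2 : (0:ℝ) - (μ / 2 + Real.log β / μ) = -μ / 2 - Real.log β / μ := by ring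
  rw [e1, e2]

lemma Fb_mono {β : ℝ} (hβ : 0 < β) : MonotoneOn (Fb β) (Ioi 0) := by
  have hint : interior (Ioi (0:ℝ)) = Ioi 0 := interior_Ioi
  refine monotoneOn_of_deriv_nonneg (convex_Ioi 0) ?_ ?_ ?_
  · exact fun x hx => ((Fb_hasDeriv hβ hx).continuousAt).continuousWithinAt
  · rw [hint]
    exact fun x hx => ((Fb_hasDeriv hβ hx).differentiableAt).differentiableWithinAt
  · rw [hint]
    intro x hx
    rw [(Fb_hasDeriv hβ hx).deriv]
    exact gaussianPDFReal_nonneg 0 1 _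

lemma hs_mono_mean {μ μ' β : ℝ} (h0 : 0 ≤ μ) (h : μ ≤ μ') (hβ : 0 < β) :
    hockeyStick β (gaussianReal μ 1) (gaussianReal 0 1) ≤
      hockeyStick β (gaussianReal μ' 1) (gaussianReal 0 1) := by
  rcases h0.eq_or_lt with h0 | h0
  · subst h0
    refine (hs_self_le β hβ.le (gaussianReal 0 1)).trans (max_le ?_ (hs_nonneg β hβ.le _ _))
    have := hs_ge β hβ.le (gaussianReal μ' 1) (gaussianReal 0 1) MeasurableSet.univ
    simpa using this
  · have h0' : 0 < μ' := lt_of_lt_of_le h0 h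
    rw [hs_eq_Fb h0 hβ, hs_eq_Fb h0' hβ]
    exact Fb_mono hβ h0 h0' h

lemma gauss_prod_wd (a b : ℝ) :
    (gaussianReal a 1).prod (gaussianReal b 1) =
      (volume.prod volume).withDensity (fun z => gaussianPDF a 1 z.1 * gaussianPDF b 1 z.2) := by
  refine Measure.prod_eq fun s t hs ht => ?_
  rw [withDensity_apply _ (hs.prod ht), ← Measure.prod_restrict s t,
    lintegral_prod_mul (meas_pdf a).aemeasurable (meas_pdf b).aemeasurable,
    ← withDensity_apply _ hs, ← withDensity_apply _ ht, ← gauss_wd, ← gauss_wd]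

lemma measurable_F2 (a b : ℝ) :
    Measurable (fun z : ℝ × ℝ => gaussianPDF a 1 z.1 * gaussianPDF b 1 z.2) :=
  ((meas_pdf a).comp measurable_fst).mul ((meas_pdf b).comp measurable_snd)

lemma hp_measurable (p q s : ℝ) : MeasurableSet {z : ℝ × ℝ | s < p * z.1 + q * z.2} :=
  measurableSet_lt measurable_const (by fun_prop)

lemma rot_measure {p q : ℝ} (hpq : p ^ 2 + q ^ 2 = 1) :
    Measure.map (⇑(Matrix.toLin (Module.Basis.finTwoProd ℝ) (Module.Basis.finTwoProd ℝ) !![p, -q; q, p]))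
      (volume : Measure (ℝ × ℝ)) = volume := by
  set R := Matrix.toLin (Module.Basis.finTwoProd ℝ) (Module.Basis.finTwoProd ℝ) !![p, -q; q, p] with hR
  have hdet : LinearMap.det R = 1 := by
    rw [hR, LinearMap.det_toLin, Matrix.det_fin_two_of]
    linear_combination hpq
  rw [Measure.map_linearMap_addHaar_eq_smul_addHaar volume (by rw [hdet]; norm_num), hdet]
  norm_num

lemma pdf0_sq (u v u' v' : ℝ) (h : u ^ 2 + v ^ 2 = u' ^ 2 + v' ^ 2) :
    gaussianPDF 0 1 u * gaussianPDF 0 1 v = gaussianPDF 0 1 u' * gaussianPDF 0 1 v' := by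
  simp only [gaussianPDF_def]
  rw [← ENNReal.ofReal_mul (gaussianPDFReal_nonneg 0 1 u),
    ← ENNReal.ofReal_mul (gaussianPDFReal_nonneg 0 1 u')]
  congr 1
  simp only [gaussianPDFReal_def]
  push_cast
  rw [show ((√(2 * π * 1))⁻¹ * rexp (-(u - 0) ^ 2 / (2 * 1))) *
      ((√(2 * π * 1))⁻¹ * rexp (-(v - 0) ^ 2 / (2 * 1))) =
      (√(2 * π * 1))⁻¹ ^ 2 * (rexp (-(u - 0) ^ 2 / (2 * 1)) * rexp (-(v - 0) ^ 2 / (2 * 1)))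
      by ring,
    show ((√(2 * π * 1))⁻¹ * rexp (-(u' - 0) ^ 2 / (2 * 1))) *
      ((√(2 * π * 1))⁻¹ * rexp (-(v' - 0) ^ 2 / (2 * 1))) =
      (√(2 * π * 1))⁻¹ ^ 2 * (rexp (-(u' - 0) ^ 2 / (2 * 1)) * rexp (-(v' - 0) ^ 2 / (2 * 1)))
      by ring]
  congr 1
  rw [← Real.exp_add, ← Real.exp_add]
  congr 1
  linarith

lemma gauss2_rot {p q : ℝ} (hpq : p ^ 2 + q ^ 2 = 1) (s : ℝ) :
    ((gaussianReal 0 1).prod (gaussianReal 0 1)) {z : ℝ × ℝ | s < p * z.1 + q * z.2} =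
      gaussianReal 0 1 (Ioi s) := by
  set R := Matrix.toLin (Module.Basis.finTwoProd ℝ) (Module.Basis.finTwoProd ℝ) !![p, -q; q, p] with hR
  have hRapp : ∀ x : ℝ × ℝ, R x = (p * x.1 + -q * x.2, q * x.1 + p * x.2) := fun x =>
    Matrix.toLin_finTwoProd_apply p (-q) q p x
  have hRm : Measurable ⇑R := R.continuous_of_finiteDimensional.measurable
  have hHP := hp_measurable p q s
  have hvol : Measure.map (⇑R) (volume.prod volume) = volume.prod volume := by
    have := rot_measure hpq
    rwa [← hR, Measure.volume_eq_prod] at this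
  rw [gauss_prod_wd 0 0, withDensity_apply _ hHP]
  have step1 : ∫⁻ z in {z : ℝ × ℝ | s < p * z.1 + q * z.2},
        (gaussianPDF 0 1 z.1 * gaussianPDF 0 1 z.2) ∂(volume.prod volume) =
      ∫⁻ x in ⇑R ⁻¹' {z : ℝ × ℝ | s < p * z.1 + q * z.2},
        (gaussianPDF 0 1 (R x).1 * gaussianPDF 0 1 (R x).2) ∂(volume.prod volume) := by
    nth_rewrite 1 [← hvol]
    exact setLIntegral_map hHP (measurable_F2 0 0) hRm
  have hpre : ⇑R ⁻¹' {z : ℝ × ℝ | s < p * z.1 + q * z.2} = Ioi s ×ˢ univ := by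
    ext x
    simp only [mem_preimage, mem_setOf_eq, hRapp, mem_prod, mem_Ioi, mem_univ, and_true]
    have e : p * (p * x.1 + -q * x.2) + q * (q * x.1 + p * x.2) = x.1 := by
      linear_combination x.1 * hpq
    rw [e]
  have hpdf : ∀ x : ℝ × ℝ, gaussianPDF 0 1 (R x).1 * gaussianPDF 0 1 (R x).2 =
      gaussianPDF 0 1 x.1 * gaussianPDF 0 1 x.2 := by
    intro x
    rw [hRapp]
    exact pdf0_sq _ _ _ _ (by linear_combination (x.1 ^ 2 + x.2 ^ 2) * hpq)
  rw [step1, hpre]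
  simp_rw [hpdf]
  rw [← withDensity_apply _ (measurableSet_Ioi.prod MeasurableSet.univ), ← gauss_prod_wd,
    Measure.prod_prod, measure_univ, mul_one]

lemma gauss2_HP (a b : ℝ) {p q : ℝ} (hpq : p ^ 2 + q ^ 2 = 1) (s : ℝ) :
    ((gaussianReal a 1).prod (gaussianReal b 1)) {z : ℝ × ℝ | s < p * z.1 + q * z.2} =
      gaussianReal 0 1 (Ioi (s - (p * a + q * b))) := by
  rw [← gauss_map_add a, ← gauss_map_add b,
    Measure.map_prod_map _ _ (by fun_prop) (by fun_prop),
    Measure.map_apply (by fun_prop) (hp_measurable p q s)]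
  have hpre : Prod.map (· + a) (· + b) ⁻¹' {z : ℝ × ℝ | s < p * z.1 + q * z.2} =
      {z : ℝ × ℝ | s - (p * a + q * b) < p * z.1 + q * z.2} := by
    ext x
    simp only [mem_preimage, Prod.map_apply, mem_setOf_eq, Prod.map_fst, Prod.map_snd]
    constructor <;> intro h <;> nlinarith
  rw [hpre, gauss2_rot hpq]

lemma final_S_eq {m w B α : ℝ} (hα : 0 < α) (hB : 0 < B) (hB2 : B ^ 2 = m ^ 2 + w ^ 2) :
    {z : ℝ × ℝ | ENNReal.ofReal α * (gaussianPDF 0 1 z.1 * gaussianPDF 0 1 z.2) <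
        gaussianPDF m 1 z.1 * gaussianPDF w 1 z.2} =
      {z : ℝ × ℝ | (Real.log α + B ^ 2 / 2) / B < m / B * z.1 + w / B * z.2} := by
  ext z
  simp only [mem_setOf_eq, gaussianPDF_def]
  rw [← ENNReal.ofReal_mul (gaussianPDFReal_nonneg 0 1 z.1),
    ← ENNReal.ofReal_mul (gaussianPDFReal_nonneg m 1 z.1),
    ← ENNReal.ofReal_mul hα.le,
    ENNReal.ofReal_lt_ofReal_iff
      (mul_pos (gaussianPDFReal_pos m 1 z.1 one_ne) (gaussianPDFReal_pos w 1 z.2 one_ne))]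
  simp only [gaussianPDFReal_def]
  push_cast
  set C := (√(2 * π * 1))⁻¹ with hC
  have hCpos : 0 < C := by
    rw [hC]
    have : 0 < √(2 * π * 1) := Real.sqrt_pos.2 (by positivity)
    positivity
  rw [show α * (C * rexp (-(z.1 - 0) ^ 2 / (2 * 1)) * (C * rexp (-(z.2 - 0) ^ 2 / (2 * 1)))) =
      C ^ 2 * (α * (rexp (-(z.1 - 0) ^ 2 / (2 * 1)) * rexp (-(z.2 - 0) ^ 2 / (2 * 1)))) by ring,
    show C * rexp (-(z.1 - m) ^ 2 / (2 * 1)) * (C * rexp (-(z.2 - w) ^ 2 / (2 * 1))) =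
      C ^ 2 * (rexp (-(z.1 - m) ^ 2 / (2 * 1)) * rexp (-(z.2 - w) ^ 2 / (2 * 1))) by ring,
    mul_lt_mul_iff_right₀ (by positivity : (0:ℝ) < C ^ 2)]
  nth_rewrite 1 [show α = rexp (Real.log α) from (Real.exp_log hα).symm]
  rw [← Real.exp_add, ← Real.exp_add, ← Real.exp_add, Real.exp_lt_exp]
  rw [div_lt_iff₀ hB]
  constructor <;> intro h
  · have : Real.log α + B ^ 2 / 2 < m * z.1 + w * z.2 := by nlinarith
    calc Real.log α + B ^ 2 / 2 < m * z.1 + w * z.2 := this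
      _ = (m / B * z.1 + w / B * z.2) * B := by field_simp
  · have h2 : Real.log α + B ^ 2 / 2 < m * z.1 + w * z.2 := by
      have e : (m / B * z.1 + w / B * z.2) * B = m * z.1 + w * z.2 := by field_simp
      rw [e] at h
      exact h
    nlinarith

lemma final_lemma {m w : ℝ} (hm : 0 ≤ m) (hw : 0 ≤ w) {α : ℝ} (hα : 0 < α) :
    hockeyStick α ((gaussianReal m 1).prod (gaussianReal w 1))
        ((gaussianReal 0 1).prod (gaussianReal 0 1)) ≤
      hockeyStick α (gaussianReal (Real.sqrt (m ^ 2 + w ^ 2)) 1) (gaussianReal 0 1) := by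
  set B := Real.sqrt (m ^ 2 + w ^ 2) with hBdef
  rcases eq_or_lt_of_le (Real.sqrt_nonneg (m ^ 2 + w ^ 2)) with hB0 | hB
  · -- B = 0, so m = w = 0
    have hsum : m ^ 2 + w ^ 2 = 0 := by
      nlinarith [Real.sq_sqrt (by positivity : (0:ℝ) ≤ m ^ 2 + w ^ 2), hB0]
    have hm0 : m = 0 := by nlinarith
    have hw0 : w = 0 := by nlinarith
    subst hm0; subst hw0
    refine (hs_self_le α hα.le _).trans (max_le ?_ (hs_nonneg α hα.le _ _))
    have := hs_ge α hα.le (gaussianReal B 1) (gaussianReal 0 1) MeasurableSet.univ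
    simpa using this
  · have hB2 : B ^ 2 = m ^ 2 + w ^ 2 := Real.sq_sqrt (by positivity)
    have hpq : (m / B) ^ 2 + (w / B) ^ 2 = 1 := by
      rw [div_pow, div_pow, ← add_div, ← hB2]
      exact div_self (pow_pos hB 2).ne'
    have hpmqw : m / B * m + w / B * w = B := by
      rw [div_mul_eq_mul_div, div_mul_eq_mul_div, ← add_div, div_eq_iff hB.ne']
      linear_combination -hB2
    refine hs_le fun E hE => ?_
    set sstar := (Real.log α + B ^ 2 / 2) / B with hsstar
    have key := np (volume.prod volume) (measurable_F2 m w) (measurable_F2 0 0)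
      (ENNReal.ofReal α) hE
    rw [final_S_eq hα hB hB2] at key
    rw [← gauss_prod_wd m w, ← gauss_prod_wd 0 0, ← hsstar] at key
    have hPS : ((gaussianReal m 1).prod (gaussianReal w 1))
        {z : ℝ × ℝ | sstar < m / B * z.1 + w / B * z.2} = gaussianReal B 1 (Ioi sstar) := by
      rw [gauss2_HP m w hpq sstar, hpmqw, gauss_Ioi B sstar]
    have hQS : ((gaussianReal 0 1).prod (gaussianReal 0 1))
        {z : ℝ × ℝ | sstar < m / B * z.1 + w / B * z.2} = gaussianReal 0 1 (Ioi sstar) := by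
      rw [gauss2_HP 0 0 hpq sstar]
      norm_num
    rw [hPS, hQS] at key
    have h1 := ENNReal.toReal_mono (by finiteness) key
    rw [ENNReal.toReal_add (by finiteness) (by finiteness),
      ENNReal.toReal_add (by finiteness) (by finiteness),
      ENNReal.toReal_mul, ENNReal.toReal_mul, ENNReal.toReal_ofReal hα.le] at h1
    have h2 := hs_ge α hα.le (gaussianReal B 1) (gaussianReal 0 1)
      (measurableSet_Ioi (a := sstar))
    linarith

lemma toReal_prob_le_one {Y : Type*} [MeasurableSpace Y] (μ : Measure Y)
    [IsProbabilityMeasure μ] (s : Set Y) : (μ s).toReal ≤ 1 := by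
  have h := prob_le_one (μ := μ) (s := s)
  calc (μ s).toReal ≤ (1 : ℝ≥0∞).toReal :=
        ENNReal.toReal_mono (by simp) h
    _ = 1 := by simp

lemma integrable_of_unit {X : Type*} [MeasurableSpace X] {μ : Measure X} [IsFiniteMeasure μ]
    {f : X → ℝ} (hf : Measurable f) (h0 : ∀ a, 0 ≤ f a) (h1 : ∀ a, f a ≤ 1) :
    Integrable f μ :=
  Integrable.mono' (integrable_const 1) hf.aestronglyMeasurable
    (ae_of_all _ fun a => by rw [Real.norm_eq_abs, abs_of_nonneg (h0 a)]; exact h1 a)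

lemma Tg_continuous (m : ℝ) : Continuous (Tg m) := by
  have : Tg m = fun c => Phi (m - c) := funext fun c => Tg_eq_Phi m c
  rw [this]
  exact Phi_continuous.comp (continuous_const.sub continuous_id)

lemma sim {X Y : Type*} [MeasurableSpace X] [MeasurableSpace Y]
    (P Q : Measure X) [IsProbabilityMeasure P] [IsProbabilityMeasure Q]
    (κ κ' : Kernel X Y) [IsMarkovKernel κ] [IsMarkovKernel κ']
    {m : ℝ} (hm : 0 ≤ m)
    (hP : ∀ᵐ a ∂P, ∀ β : ℝ, 0 < β →
      hockeyStick β (κ a) (κ' a) ≤ hockeyStick β (gaussianReal m 1) (gaussianReal 0 1))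
    (hQ : ∀ᵐ a ∂Q, ∀ β : ℝ, 0 < β →
      hockeyStick β (κ a) (κ' a) ≤ hockeyStick β (gaussianReal m 1) (gaussianReal 0 1))
    {α : ℝ} (hα : 0 < α) :
    hockeyStick α (P ⊗ₘ κ) (Q ⊗ₘ κ') ≤
      hockeyStick α (P.prod (gaussianReal m 1)) (Q.prod (gaussianReal 0 1)) := by
  refine hs_le fun E hE => ?_
  set x : X → ℝ := fun a => ((κ a) (Prod.mk a ⁻¹' E)).toReal with hxdef
  set y : X → ℝ := fun a => ((κ' a) (Prod.mk a ⁻¹' E)).toReal with hydef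
  have hxm : Measurable x := (Kernel.measurable_kernel_prodMk_left hE).ennreal_toReal
  have hym : Measurable y := (Kernel.measurable_kernel_prodMk_left hE).ennreal_toReal
  have hx0 : ∀ a, 0 ≤ x a := fun a => ENNReal.toReal_nonneg
  have hy0 : ∀ a, 0 ≤ y a := fun a => ENNReal.toReal_nonneg
  have hx1 : ∀ a, x a ≤ 1 := fun a => toReal_prob_le_one _ _
  have hy1 : ∀ a, y a ≤ 1 := fun a => toReal_prob_le_one _ _
  set S : Set (X × ℝ) := {z | Tg m z.2 < x z.1} with hSdef
  have hSm : MeasurableSet S :=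
    measurableSet_lt ((Tg_continuous m).measurable.comp measurable_snd)
      (hxm.comp measurable_fst)
  have hslice : ∀ a, Prod.mk a ⁻¹' S = {t | Tg m t < x a} := fun a => rfl
  -- pointwise claims
  have claim1 : ∀ a, x a ≤ (gaussianReal m 1 {t : ℝ | Tg m t < x a}).toReal := by
    intro a
    rcases lt_or_ge (x a) 1 with h1 | h1
    · rcases le_or_gt (x a) 0 with h0 | h0
      · exact h0.trans ENNReal.toReal_nonneg
      · obtain ⟨c, hc⟩ := exists_Tg_eq m h0 h1
        have hset : {t : ℝ | Tg m t < x a} = Ioi c := by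
          ext t
          simp only [mem_setOf_eq, mem_Ioi]
          constructor
          · intro h
            by_contra hle
            push_neg at hle
            exact absurd h (not_lt.2 (hc ▸ (Tg_strictAnti m).antitone hle))
          · intro h
            rw [← hc]
            exact Tg_strictAnti m h
        rw [hset]
        exact hc.ge
    · have hset : {t : ℝ | Tg m t < x a} = univ :=
        eq_univ_of_forall fun t => lt_of_lt_of_le (Tg_lt_one m t) h1
      rw [hset]
      simpa using hx1 a
  have claim2 : ∀ a, (∀ β : ℝ, 0 < β →
      hockeyStick β (κ a) (κ' a) ≤ hockeyStick β (gaussianReal m 1) (gaussianReal 0 1)) →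
      (gaussianReal 0 1 {t : ℝ | Tg m t < x a}).toReal ≤ y a := by
    intro a ha
    have hEa : MeasurableSet (Prod.mk a ⁻¹' E) := measurable_prodMk_left hE
    have master : ∀ c : ℝ, Tg m c ≤ x a → Tg 0 c ≤ y a := by
      intro c hcx
      rcases hm.eq_or_lt with hm0 | hm0
      · -- m = 0
        have h1 : x a - 1 * y a ≤ hockeyStick 1 (κ a) (κ' a) := by
          simpa [hxdef, hydef] using hs_ge 1 one_pos.le (κ a) (κ' a) hEa
        have h2 : hockeyStick 1 (gaussianReal m 1) (gaussianReal 0 1) ≤ 0 := by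
          rw [← hm0]
          exact (hs_self_le 1 one_pos.le _).trans (by norm_num)
        have h3 := (h1.trans (ha 1 one_pos)).trans h2
        have h4 : Tg 0 c ≤ Tg m c := by rw [← hm0]
        linarith
      · set β := rexp (m * c - m ^ 2 / 2) with hβdef
        have hβ : 0 < β := Real.exp_pos _
        have h1 : x a - β * y a ≤ hockeyStick β (κ a) (κ' a) := by
          simpa [hxdef, hydef] using hs_ge β hβ.le (κ a) (κ' a) hEa
        have h2 := ha β hβ
        rw [hs_gauss_eq' hm0 c] at h2
        have h3 : β * Tg 0 c ≤ β * y a := by linarith [h1.trans h2]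
        exact le_of_mul_le_mul_left h3 hβ
    rcases lt_or_ge (x a) 1 with h1 | h1
    · rcases le_or_gt (x a) 0 with h0 | h0
      · have hset : {t : ℝ | Tg m t < x a} = ∅ :=
          eq_empty_of_forall_notMem fun t ht =>
            absurd (Tg_pos m t) (not_lt.2 ((le_of_lt ht).trans h0))
        rw [hset]
        simpa using hy0 a
      · obtain ⟨c, hc⟩ := exists_Tg_eq m h0 h1
        have hset : {t : ℝ | Tg m t < x a} = Ioi c := by
          ext t
          simp only [mem_setOf_eq, mem_Ioi]
          constructor
          · intro h
            by_contra hle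
            push_neg at hle
            exact absurd h (not_lt.2 (hc ▸ (Tg_strictAnti m).antitone hle))
          · intro h
            rw [← hc]
            exact Tg_strictAnti m h
        rw [hset]
        exact master c hc.le
    · have hset : {t : ℝ | Tg m t < x a} = univ :=
        eq_univ_of_forall fun t => lt_of_lt_of_le (Tg_lt_one m t) h1
      have hy : 1 ≤ y a :=
        le_of_tendsto Tg0_tendsto_atBot
          (Filter.Eventually.of_forall fun c => master c ((Tg_le_one m c).trans h1))
      rw [hset]
      simpa using hy
  -- convert compProd applications to integrals
  set xh : X → ℝ := fun a => (gaussianReal m 1 {t : ℝ | Tg m t < x a}).toReal with hxhdef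
  set yh : X → ℝ := fun a => (gaussianReal 0 1 {t : ℝ | Tg m t < x a}).toReal with hyhdef
  have hxhm : Measurable xh := by
    have := (Kernel.measurable_kernel_prodMk_left
      (κ := Kernel.const X (gaussianReal m 1)) hSm).ennreal_toReal
    simpa [Kernel.const_apply, hslice] using this
  have hyhm : Measurable yh := by
    have := (Kernel.measurable_kernel_prodMk_left
      (κ := Kernel.const X (gaussianReal 0 1)) hSm).ennreal_toReal
    simpa [Kernel.const_apply, hslice] using this
  have hPE : ((P ⊗ₘ κ) E).toReal = ∫ a, x a ∂P := by
    rw [Measure.compProd_apply hE, ← integral_toReal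
      (Kernel.measurable_kernel_prodMk_left hE).aemeasurable
      (ae_of_all _ fun a => measure_lt_top _ _)]
  have hQE : ((Q ⊗ₘ κ') E).toReal = ∫ a, y a ∂Q := by
    rw [Measure.compProd_apply hE, ← integral_toReal
      (Kernel.measurable_kernel_prodMk_left hE).aemeasurable
      (ae_of_all _ fun a => measure_lt_top _ _)]
  have hPS : ((P.prod (gaussianReal m 1)) S).toReal = ∫ a, xh a ∂P := by
    rw [Measure.prod_apply hSm, ← integral_toReal (f := fun a => gaussianReal m 1 (Prod.mk a ⁻¹' S))
      (by simpa [Kernel.const_apply] using (Kernel.measurable_kernel_prodMk_left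
        (κ := Kernel.const X (gaussianReal m 1)) hSm).aemeasurable)
      (ae_of_all _ fun a => measure_lt_top _ _)]
    simp only [hslice]
    rfl
  have hQS : ((Q.prod (gaussianReal 0 1)) S).toReal = ∫ a, yh a ∂Q := by
    rw [Measure.prod_apply hSm, ← integral_toReal (f := fun a => gaussianReal 0 1 (Prod.mk a ⁻¹' S))
      (by simpa [Kernel.const_apply] using (Kernel.measurable_kernel_prodMk_left
        (κ := Kernel.const X (gaussianReal 0 1)) hSm).aemeasurable)
      (ae_of_all _ fun a => measure_lt_top _ _)]
    simp only [hslice]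
    rfl
  have hint_x : Integrable x P := integrable_of_unit hxm hx0 hx1
  have hint_y : Integrable y Q := integrable_of_unit hym hy0 hy1
  have hint_xh : Integrable xh P :=
    integrable_of_unit hxhm (fun a => ENNReal.toReal_nonneg) (fun a => toReal_prob_le_one _ _)
  have hint_yh : Integrable yh Q :=
    integrable_of_unit hyhm (fun a => ENNReal.toReal_nonneg) (fun a => toReal_prob_le_one _ _)
  have hI1 : ∫ a, x a ∂P ≤ ∫ a, xh a ∂P :=
    integral_mono hint_x hint_xh claim1
  have hI2 : ∫ a, yh a ∂Q ≤ ∫ a, y a ∂Q :=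
    integral_mono_ae hint_yh hint_y (hQ.mono fun a ha => claim2 a ha)
  have hfinal := hs_ge α hα.le (P.prod (gaussianReal m 1)) (Q.prod (gaussianReal 0 1)) hSm
  rw [hPE, hQE]
  rw [hPS, hQS] at hfinal
  nlinarith [hI1, hI2, hα]

lemma hs_swap_le {X Y : Type*} [MeasurableSpace X] [MeasurableSpace Y]
    (μP νQ : Measure X) (P Q : Measure Y)
    [IsProbabilityMeasure μP] [IsProbabilityMeasure νQ]
    [IsProbabilityMeasure P] [IsProbabilityMeasure Q]
    {α : ℝ} (hα : 0 < α) :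
    hockeyStick α (μP.prod P) (νQ.prod Q) ≤ hockeyStick α (P.prod μP) (Q.prod νQ) := by
  refine hs_le fun E hE => ?_
  have h1 : (μP.prod P) E = (P.prod μP) (Prod.swap ⁻¹' E) := by
    rw [← Measure.prod_swap, Measure.map_apply measurable_swap hE]
  have h2 : (νQ.prod Q) E = (Q.prod νQ) (Prod.swap ⁻¹' E) := by
    rw [← Measure.prod_swap, Measure.map_apply measurable_swap hE]
  rw [h1, h2]
  exact hs_ge α hα.le _ _ (hE.preimage measurable_swap)

lemma key_side {Ω₁ Ω₂ : Type*} [MeasurableSpace Ω₁] [MeasurableSpace Ω₂]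
    (ν ν' : Measure Ω₁) [IsProbabilityMeasure ν] [IsProbabilityMeasure ν']
    (η η' : Kernel Ω₁ Ω₂) [IsMarkovKernel η] [IsMarkovKernel η']
    (μ₁ : ℝ) (hμ₁ : 0 ≤ μ₁)
    (hdom₁ : ∀ α : ℝ, 0 < α →
      hockeyStick α ν ν' ≤ hockeyStick α (gaussianReal μ₁ 1) (gaussianReal 0 1))
    (μ₂ : Ω₁ → ℝ) (hμ₂0 : ∀ a, 0 ≤ μ₂ a)
    (hdom₂ : ∀ (a : Ω₁) (α : ℝ), 0 < α →
      hockeyStick α (η a) (η' a) ≤ hockeyStick α (gaussianReal (μ₂ a) 1) (gaussianReal 0 1))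
    (B : ℝ) (hB : 0 ≤ B)
    (hbudget : ∀ᵐ a ∂ν, μ₁ ^ 2 + μ₂ a ^ 2 ≤ B ^ 2)
    (hbudget' : ∀ᵐ a ∂ν', μ₁ ^ 2 + μ₂ a ^ 2 ≤ B ^ 2)
    {α : ℝ} (hα : 0 < α) :
    hockeyStick α (ν ⊗ₘ η) (ν' ⊗ₘ η') ≤
      hockeyStick α (gaussianReal B 1) (gaussianReal 0 1) := by
  haveI : (ae ν).NeBot := ae_neBot.mpr (IsProbabilityMeasure.ne_zero ν)
  obtain ⟨a₀, ha₀⟩ := hbudget.exists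
  have hμ₁B : μ₁ ^ 2 ≤ B ^ 2 := by nlinarith [sq_nonneg (μ₂ a₀)]
  set m := Real.sqrt (B ^ 2 - μ₁ ^ 2) with hmdef
  have hm : 0 ≤ m := Real.sqrt_nonneg _
  have hm2 : m ^ 2 = B ^ 2 - μ₁ ^ 2 := Real.sq_sqrt (by linarith)
  have hsqrt : Real.sqrt (m ^ 2 + μ₁ ^ 2) = B := by
    rw [show m ^ 2 + μ₁ ^ 2 = B ^ 2 by linarith]
    exact Real.sqrt_sq hB
  have hmono : ∀ a : Ω₁, μ₁ ^ 2 + μ₂ a ^ 2 ≤ B ^ 2 → ∀ β : ℝ, 0 < β →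
      hockeyStick β (η a) (η' a) ≤ hockeyStick β (gaussianReal m 1) (gaussianReal 0 1) := by
    intro a ha β hβ
    refine (hdom₂ a β hβ).trans (hs_mono_mean (hμ₂0 a) ?_ hβ)
    have h2 : μ₂ a ^ 2 ≤ m ^ 2 := by linarith
    calc μ₂ a = Real.sqrt (μ₂ a ^ 2) := (Real.sqrt_sq (hμ₂0 a)).symm
      _ ≤ Real.sqrt (m ^ 2) := Real.sqrt_le_sqrt h2
      _ = m := Real.sqrt_sq hm
  have hdomm : ∀ᵐ a ∂ν, ∀ β : ℝ, 0 < β →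
      hockeyStick β (η a) (η' a) ≤ hockeyStick β (gaussianReal m 1) (gaussianReal 0 1) :=
    hbudget.mono fun a ha => hmono a ha
  have hdomm' : ∀ᵐ a ∂ν', ∀ β : ℝ, 0 < β →
      hockeyStick β (η a) (η' a) ≤ hockeyStick β (gaussianReal m 1) (gaussianReal 0 1) :=
    hbudget'.mono fun a ha => hmono a ha
  have hconst : ∀ᵐ t ∂(gaussianReal m 1), ∀ β : ℝ, 0 < β →
      hockeyStick β ((Kernel.const ℝ ν) t) ((Kernel.const ℝ ν') t) ≤
        hockeyStick β (gaussianReal μ₁ 1) (gaussianReal 0 1) := by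
    refine ae_of_all _ fun t β hβ => ?_
    simpa [Kernel.const_apply] using hdom₁ β hβ
  have hconst' : ∀ᵐ t ∂(gaussianReal 0 1), ∀ β : ℝ, 0 < β →
      hockeyStick β ((Kernel.const ℝ ν) t) ((Kernel.const ℝ ν') t) ≤
        hockeyStick β (gaussianReal μ₁ 1) (gaussianReal 0 1) := by
    refine ae_of_all _ fun t β hβ => ?_
    simpa [Kernel.const_apply] using hdom₁ β hβ
  calc hockeyStick α (ν ⊗ₘ η) (ν' ⊗ₘ η')
      ≤ hockeyStick α (ν.prod (gaussianReal m 1)) (ν'.prod (gaussianReal 0 1)) :=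
        sim ν ν' η η' hm hdomm hdomm' hα
    _ ≤ hockeyStick α ((gaussianReal m 1).prod ν) ((gaussianReal 0 1).prod ν') :=
        hs_swap_le ν ν' _ _ hα
    _ = hockeyStick α ((gaussianReal m 1) ⊗ₘ Kernel.const ℝ ν)
        ((gaussianReal 0 1) ⊗ₘ Kernel.const ℝ ν') := by
        rw [Measure.compProd_const, Measure.compProd_const]
    _ ≤ hockeyStick α ((gaussianReal m 1).prod (gaussianReal μ₁ 1))
        ((gaussianReal 0 1).prod (gaussianReal 0 1)) :=
        sim (gaussianReal m 1) (gaussianReal 0 1) (Kernel.const ℝ ν) (Kernel.const ℝ ν')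
          hμ₁ hconst hconst' hα
    _ ≤ hockeyStick α (gaussianReal (Real.sqrt (m ^ 2 + μ₁ ^ 2)) 1) (gaussianReal 0 1) :=
        final_lemma hm hμ₁ hα
    _ = hockeyStick α (gaussianReal B 1) (gaussianReal 0 1) := by rw [hsqrt]

end TwoStepAux

open TwoStepAux in
/-- Two-step fully adaptive composition (key inductive step): if the first mechanism has GDP
parameter `μ₁`, the second (adaptively chosen) mechanism has conditional GDP parameter
`μ₂(a)`, and `μ₁² + μ₂(a)² ≤ B²` almost surely, then the composition-products are dominated
in hockey-stick divergence (in both directions) by the pair `(N(B,1), N(0,1))`. -/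
theorem two_step_adaptive_composition_gdp {Ω₁ Ω₂ : Type*}
    [MeasurableSpace Ω₁] [MeasurableSpace Ω₂]
    (ν ν' : Measure Ω₁) [IsProbabilityMeasure ν] [IsProbabilityMeasure ν']
    (η η' : Kernel Ω₁ Ω₂) [IsMarkovKernel η] [IsMarkovKernel η']
    (μ₁ : ℝ) (hμ₁ : 0 ≤ μ₁)
    (hdom₁ : ∀ α : ℝ, 0 < α →
      max (hockeyStick α ν ν') (hockeyStick α ν' ν)
        ≤ hockeyStick α (gaussianReal μ₁ 1) (gaussianReal 0 1))
    (μ₂ : Ω₁ → ℝ) (hμ₂meas : Measurable μ₂) (hμ₂0 : ∀ a, 0 ≤ μ₂ a)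
    (hdom₂ : ∀ (a : Ω₁) (α : ℝ), 0 < α →
      max (hockeyStick α (η a) (η' a)) (hockeyStick α (η' a) (η a))
        ≤ hockeyStick α (gaussianReal (μ₂ a) 1) (gaussianReal 0 1))
    (B : ℝ) (hB : 0 ≤ B)
    (hbudget : ∀ᵐ a ∂ν, μ₁ ^ 2 + μ₂ a ^ 2 ≤ B ^ 2)
    (hbudget' : ∀ᵐ a ∂ν', μ₁ ^ 2 + μ₂ a ^ 2 ≤ B ^ 2) :
    ∀ α : ℝ, 0 < α →
      max (hockeyStick α (ν ⊗ₘ η) (ν' ⊗ₘ η'))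
          (hockeyStick α (ν' ⊗ₘ η') (ν ⊗ₘ η))
        ≤ hockeyStick α (gaussianReal B 1) (gaussianReal 0 1) := by
  intro α hα
  refine max_le ?_ ?_
  · exact key_side ν ν' η η' μ₁ hμ₁
      (fun β hβ => (le_max_left _ _).trans (hdom₁ β hβ))
      μ₂ hμ₂0
      (fun a β hβ => (le_max_left _ _).trans (hdom₂ a β hβ))
      B hB hbudget hbudget' hα
  · exact key_side ν' ν η' η μ₁ hμ₁
      (fun β hβ => (le_max_right _ _).trans (hdom₁ β hβ))
      μ₂ hμ₂0
      (fun a β hβ => (le_max_right _ _).trans (hdom₂ a β hβ))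
      B hB hbudget' hbudget hα
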